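/- Let μ be a finite Borel measure on ℂ with compact support. Then the logarithmic potential p_μ(z) = ∫_ℂ log|w − z| dμ(w) is subharmonic on all of ℂ. -/

import Mathlib

open MeasureTheory Complex Filter Topology
open scoped ENNReal

noncomputable def posE (x : EReal) : ℝ≥0∞ := if x = ⊤ then ⊤ else ENNReal.ofReal x.toReal

noncomputable def eInt {X : Type*} [MeasurableSpace X] (μ : Measure X) (f : X → EReal) : EReal :=
  ENNReal.toEReal (∫⁻ x, posE (f x) ∂μ) - ENNReal.toEReal (∫⁻ x, posE (-(f x)) ∂μ)

def Subharmonic (u : ℂ → EReal) (D : Set ℂ) : Prop :=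
  UpperSemicontinuousOn u D ∧
    ∀ w ∈ D, ∃ ρ > (0:ℝ), ∀ r : ℝ, 0 ≤ r → r < ρ →
      ∀ g : ℝ → ℝ,
        (∀ t ∈ Set.Icc (0:ℝ) (2*Real.pi),
          u (w + (r : ℂ) * Complex.exp (t * Complex.I)) ≤ (g t : EReal)) →
        IntervalIntegrable g volume 0 (2*Real.pi) →
        u w ≤ (((1/(2*Real.pi)) * ∫ t in (0:ℝ)..(2*Real.pi), g t : ℝ) : EReal)

def HarmonicOnC (h : ℂ → ℝ) (U : Set ℂ) : Prop :=
  ContDiffOn ℝ 2 h U ∧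
    ∀ z ∈ U, iteratedFDeriv ℝ 2 h z ![1, 1] + iteratedFDeriv ℝ 2 h z ![Complex.I, Complex.I] = 0

def HarmonicOnRn {n : ℕ} (h : EuclideanSpace ℝ (Fin n) → ℝ)
    (U : Set (EuclideanSpace ℝ (Fin n))) : Prop :=
  ContDiffOn ℝ 2 h U ∧
    ∀ x ∈ U, ∑ i : Fin n,
      iteratedFDeriv ℝ 2 h x ![EuclideanSpace.single i 1, EuclideanSpace.single i 1] = 0

/-- Boundary of `D` taken in the one-point compactification of `ℂ`. -/
def cbdry (D : Set ℂ) : Set (OnePoint ℂ) :=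
  frontier ((fun z : ℂ => (z : OnePoint ℂ)) '' D)

/-- The filter of approach to `ζ ∈ ∂D ⊆ ℂ∞` through points of `D`. -/
noncomputable def bfilter (D : Set ℂ) (ζ : OnePoint ℂ) : Filter ℂ :=
  Filter.comap (fun z : ℂ => (z : OnePoint ℂ)) (nhds ζ) ⊓ Filter.principal D

noncomputable def elog (x : ℝ) : EReal :=
  if x = 0 then (⊥ : EReal) else ((Real.log x : ℝ) : EReal)

noncomputable def logPotential (μ : Measure ℂ) (z : ℂ) : EReal :=
  eInt μ (fun w => elog ‖w - z‖)

noncomputable def lapl (φ : ℂ → ℝ) (z : ℂ) : ℝ :=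
  iteratedFDeriv ℝ 2 φ z ![1, 1] + iteratedFDeriv ℝ 2 φ z ![Complex.I, Complex.I]

noncomputable def energy (μ : Measure ℂ) : EReal :=
  - eInt μ (fun z => eInt μ (fun w => elog ‖z - w‖))

noncomputable def smoothConv (u : ℂ → EReal) (χ : ℂ → ℝ) (r : ℝ) (z : ℂ) : EReal :=
  eInt volume (fun w => (((r ^ 2)⁻¹ * χ (w / (r : ℂ)) : ℝ) : EReal) * u (z - w))


open intervalIntegral in
-- mean value for holomorphic
lemma mv (f : ℂ → ℂ) (hf : DifferentiableOn ℂ f (Metric.closedBall 0 1)) :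
    ∫ t in (0:ℝ)..(2*Real.pi), f (Complex.exp (t * Complex.I)) = (2*Real.pi) * f 0 := by
  have h := hf.circleIntegral_sub_inv_smul (c := 0) (R := 1) (w := 0) (by simp)
  rw [circleIntegral] at h
  simp only [deriv_circleMap, circleMap_zero, sub_zero, smul_eq_mul] at h
  have key : ∀ t : ℝ, (↑(1:ℝ) * Complex.exp (t * Complex.I) * Complex.I) *
      ((↑(1:ℝ) * Complex.exp (t * Complex.I))⁻¹ * f (↑(1:ℝ) * Complex.exp (t * Complex.I)))
      = Complex.I * f (Complex.exp (t * Complex.I)) := by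
    intro t
    have h0 : Complex.exp (t * Complex.I) ≠ 0 := Complex.exp_ne_zero _
    simp only [Complex.ofReal_one, one_mul]
    field_simp
  simp only [key] at h
  rw [intervalIntegral.integral_const_mul] at h
  have hI : (Complex.I : ℂ) ≠ 0 := Complex.I_ne_zero
  apply mul_left_cancel₀ hI
  rw [h]; ring

lemma slit (c z : ℂ) (hc : ‖c‖ < 1) (hz : ‖z‖ ≤ 1) :
    1 - c * z ∈ Complex.slitPlane := by
  refine Or.inl ?_
  have h1 : ‖(c*z)‖ < 1 := by
    rw [norm_mul]
    calc ‖c‖ * ‖z‖ ≤ ‖c‖ * 1 :=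
      mul_le_mul_of_nonneg_left hz (norm_nonneg c)
    _ < 1 := by simpa using hc
  have h2 : (c*z).re ≤ ‖(c*z)‖ := Complex.re_le_norm _
  simp only [Complex.sub_re, Complex.one_re]
  linarith

lemma L2 (c : ℂ) (hc : ‖c‖ < 1) :
    ∫ t in (0:ℝ)..(2*Real.pi), Real.log (‖(1 - c * Complex.exp (t * Complex.I))‖) = 0 := by
  have hd : DifferentiableOn ℂ (fun z => Complex.log (1 - c*z)) (Metric.closedBall 0 1) := by
    intro z hz
    simp only [Metric.mem_closedBall, dist_zero_right] at hz
    exact ((Complex.differentiableAt_log (slit c z hc hz)).comp (f := fun z => 1 - c*z) z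
      (by fun_prop)).differentiableWithinAt
  have h := mv _ hd
  simp only [mul_zero, sub_zero, Complex.log_one, mul_zero] at h
  have hcont : Continuous fun t : ℝ => Complex.log (1 - c * Complex.exp (t * Complex.I)) := by
    rw [continuous_iff_continuousAt]
    intro t
    have h1 : ‖(Complex.exp ((t:ℂ)*Complex.I))‖ ≤ 1 := by
      rw [Complex.norm_exp]; simp
    have hg : ContinuousAt (fun t : ℝ => 1 - c * Complex.exp ((t:ℂ)*Complex.I)) t := by fun_prop
    exact ContinuousAt.comp (g := Complex.log)
      (x := t) (f := fun t : ℝ => 1 - c * Complex.exp ((t:ℂ)*Complex.I))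
      (continuousAt_clog (slit c _ hc h1)) hg
  have hInt : IntervalIntegrable (fun t : ℝ => Complex.log (1 - c * Complex.exp (t * Complex.I)))
      volume 0 (2*Real.pi) := hcont.intervalIntegrable _ _
  have := Complex.reCLM.intervalIntegral_comp_comm hInt (a := 0) (b := 2*Real.pi)
  rw [h] at this
  simp only [Complex.reCLM_apply, Complex.log_re, map_zero] at this
  exact this

lemma habse (t : ℝ) : ‖(Complex.exp ((t:ℂ)*Complex.I))‖ = 1 := by
  rw [Complex.norm_exp]; simp

lemma habs1 (c : ℂ) (hc : ‖c‖ < 1) (t : ℝ) :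
    0 < ‖(1 - c * Complex.exp ((t:ℂ)*Complex.I))‖ := by
  have h1 : ‖(c * Complex.exp ((t:ℂ)*Complex.I))‖ < 1 := by
    rw [norm_mul, habse, mul_one]; exact hc
  have h2 := abs_norm_sub_norm_le 1 (c * Complex.exp ((t:ℂ)*Complex.I))
  rw [norm_one] at h2
  have := abs_le.1 h2
  linarith [this.1]

lemma contlog (c : ℂ) (hc : ‖c‖ < 1) :
    Continuous fun t : ℝ => Real.log (‖(1 - c * Complex.exp ((t:ℂ)*Complex.I))‖) := by
  rw [continuous_iff_continuousAt]
  intro t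
  have hg0 : Continuous (fun t : ℝ => (1:ℂ) - c * Complex.exp ((t:ℂ)*Complex.I)) := by fun_prop
  have hg : ContinuousAt (fun t : ℝ => ‖(1 - c * Complex.exp ((t:ℂ)*Complex.I))‖) t :=
    (continuous_norm.comp hg0).continuousAt
  exact ContinuousAt.comp (x := t)
    (f := fun t : ℝ => ‖(1 - c * Complex.exp ((t:ℂ)*Complex.I))‖)
    (Real.continuousAt_log (habs1 c hc t).ne') hg

lemma L3 (a : ℂ) (r : ℝ) (hr : 0 ≤ r) (h : r < ‖a‖) :
    ∫ t in (0:ℝ)..(2*Real.pi), Real.log (‖(a - r * Complex.exp (t * Complex.I))‖)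
      = (2*Real.pi) * Real.log (‖a‖) := by
  have ha : a ≠ 0 := by
    intro h0; rw [h0] at h; simp at h; linarith
  set c : ℂ := (r:ℂ)/a with hc
  have hcabs : ‖c‖ < 1 := by
    rw [hc, norm_div, Complex.norm_real, Real.norm_eq_abs, _root_.abs_of_nonneg hr]
    rw [div_lt_one (norm_pos_iff.2 ha)]
    exact h
  have hpt : ∀ t : ℝ, Real.log (‖(a - r * Complex.exp ((t:ℂ) * Complex.I))‖)
      = Real.log (‖a‖) + Real.log (‖(1 - c * Complex.exp ((t:ℂ)*Complex.I))‖) := by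
    intro t
    have : a - (r:ℂ) * Complex.exp ((t:ℂ)*Complex.I) = a * (1 - c * Complex.exp ((t:ℂ)*Complex.I)) := by
      rw [hc]; field_simp
    rw [this, norm_mul, Real.log_mul ((norm_ne_zero_iff.2 ha)) (habs1 c hcabs t).ne']
  simp only [hpt]
  rw [intervalIntegral.integral_add (intervalIntegrable_const) ((contlog c hcabs).intervalIntegrable _ _),
    L2 c hcabs, intervalIntegral.integral_const, add_zero, smul_eq_mul, sub_zero]

lemma absid (a : ℂ) (r t : ℝ) (hr : 0 < r) :
    ‖(a - (r:ℂ) * Complex.exp ((t:ℂ)*Complex.I))‖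
      = r * ‖(1 - ((starRingEnd ℂ) a / r) * Complex.exp ((t:ℂ)*Complex.I))‖ := by
  have h1 : (1:ℂ) - ((starRingEnd ℂ) a / r) * Complex.exp ((t:ℂ)*Complex.I)
      = ((r:ℂ) - (starRingEnd ℂ) a * Complex.exp ((t:ℂ)*Complex.I)) / r := by
    rw [sub_div, div_self (Complex.ofReal_ne_zero.2 hr.ne')]
    ring
  rw [h1, norm_div, Complex.norm_real, Real.norm_eq_abs, _root_.abs_of_pos hr, mul_div_cancel₀ _ hr.ne']
  set e := Complex.exp ((t:ℂ)*Complex.I) with he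
  have hene : e ≠ 0 := Complex.exp_ne_zero _
  have hconj : (starRingEnd ℂ) e = e⁻¹ := by
    rw [he, ← Complex.exp_conj, ← Complex.exp_neg]
    congr 1
    simp [Complex.conj_I]
  calc ‖(a - (r:ℂ) * e)‖
      = ‖((r:ℂ) * e - a)‖ := norm_sub_rev _ _
    _ = ‖(((r:ℂ) * e - a) * e⁻¹)‖ := by
        rw [norm_mul, norm_inv]
        have h2 : ‖e‖ = 1 := habse t
        rw [h2, inv_one, mul_one]
    _ = ‖((r:ℂ) - a * e⁻¹)‖ := by
        congr 1
        field_simp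
    _ = ‖((starRingEnd ℂ) ((r:ℂ) - a * e⁻¹))‖ := (Complex.norm_conj _).symm
    _ = ‖((r:ℂ) - (starRingEnd ℂ) a * e)‖ := by
        rw [map_sub, map_mul, Complex.conj_ofReal]
        congr 1
        rw [map_inv₀, hconj, inv_inv]

lemma L4 (a : ℂ) (r : ℝ) (h : ‖a‖ < r) :
    ∫ t in (0:ℝ)..(2*Real.pi), Real.log (‖(a - r * Complex.exp (t * Complex.I))‖)
      = (2*Real.pi) * Real.log r := by
  have hr : 0 < r := lt_of_le_of_lt (norm_nonneg a) h
  set c : ℂ := (starRingEnd ℂ) a / r with hc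
  have hcabs : ‖c‖ < 1 := by
    rw [hc, norm_div, Complex.norm_real, Real.norm_eq_abs, abs_of_pos hr, Complex.norm_conj, div_lt_one hr]
    exact h
  have hpt : ∀ t : ℝ, Real.log (‖(a - (r:ℂ) * Complex.exp ((t:ℂ) * Complex.I))‖)
      = Real.log r + Real.log (‖(1 - c * Complex.exp ((t:ℂ)*Complex.I))‖) := by
    intro t
    rw [absid a r t hr, Real.log_mul hr.ne' (habs1 c hcabs t).ne']
  simp only [hpt]
  rw [intervalIntegral.integral_add (intervalIntegrable_const) ((contlog c hcabs).intervalIntegrable _ _),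
    L2 c hcabs, intervalIntegral.integral_const, add_zero, smul_eq_mul, sub_zero]

lemma habs2 (a : ℂ) (r : ℝ) (hr : 0 ≤ r) (h : r < ‖a‖) (t : ℝ) :
    0 < ‖(a - (r:ℂ) * Complex.exp ((t:ℂ)*Complex.I))‖ := by
  have h1 : ‖((r:ℂ) * Complex.exp ((t:ℂ)*Complex.I))‖ = r := by
    rw [norm_mul, habse, mul_one, Complex.norm_real, Real.norm_eq_abs, _root_.abs_of_nonneg hr]
  have h2 := abs_norm_sub_norm_le a ((r:ℂ) * Complex.exp ((t:ℂ)*Complex.I))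
  rw [h1] at h2
  have h3 := le_trans (le_abs_self _) h2
  linarith

lemma contlog2 (a : ℂ) (r : ℝ) (h : ∀ t : ℝ, ‖(a - (r:ℂ) * Complex.exp ((t:ℂ)*Complex.I))‖ ≠ 0) :
    Continuous fun t : ℝ => Real.log (‖(a - (r:ℂ) * Complex.exp ((t:ℂ)*Complex.I))‖) := by
  rw [continuous_iff_continuousAt]
  intro t
  have hg0 : Continuous (fun t : ℝ => a - (r:ℂ) * Complex.exp ((t:ℂ)*Complex.I)) := by fun_prop
  exact ContinuousAt.comp (x := t)
    (f := fun t : ℝ => ‖(a - (r:ℂ) * Complex.exp ((t:ℂ)*Complex.I))‖)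
    (Real.continuousAt_log (h t)) (continuous_norm.comp hg0).continuousAt

lemma contmax (a : ℂ) (r ε : ℝ) (hε : 0 < ε) :
    Continuous fun t : ℝ => Real.log (max (‖(a - (r:ℂ) * Complex.exp ((t:ℂ)*Complex.I))‖) ε) := by
  rw [continuous_iff_continuousAt]
  intro t
  have hg0 : Continuous (fun t : ℝ => max (‖(a - (r:ℂ) * Complex.exp ((t:ℂ)*Complex.I))‖) ε) := by
    apply Continuous.max ?_ continuous_const
    exact continuous_norm.comp (by fun_prop)
  have hne : max (‖(a - (r:ℂ) * Complex.exp ((t:ℂ)*Complex.I))‖) ε ≠ 0 :=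
    (lt_of_lt_of_le hε (le_max_right _ _)).ne'
  exact ContinuousAt.comp (x := t)
    (f := fun t : ℝ => max (‖(a - (r:ℂ) * Complex.exp ((t:ℂ)*Complex.I))‖) ε)
    (Real.continuousAt_log hne) hg0.continuousAt

-- case |a| > r : truncated mean value inequality with exact value
lemma L5a (a : ℂ) (r ε : ℝ) (hr : 0 ≤ r) (hε : 0 < ε) (h : r < ‖a‖) :
    (2*Real.pi) * Real.log (‖a‖)
      ≤ ∫ t in (0:ℝ)..(2*Real.pi),
          Real.log (max (‖(a - (r:ℂ) * Complex.exp ((t:ℂ) * Complex.I))‖) ε) := by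
  rw [← L3 a r hr h]
  apply intervalIntegral.integral_mono_on (by positivity)
    ((contlog2 a r (fun t => (habs2 a r hr h t).ne')).intervalIntegrable _ _)
    ((contmax a r ε hε).intervalIntegrable _ _)
  intro t _
  exact Real.log_le_log (habs2 a r hr h t) (le_max_left _ _)

lemma habs2' (a : ℂ) (r : ℝ) (hr : 0 ≤ r) (h : ‖a‖ < r) (t : ℝ) :
    0 < ‖(a - (r:ℂ) * Complex.exp ((t:ℂ)*Complex.I))‖ := by
  have h1 : ‖((r:ℂ) * Complex.exp ((t:ℂ)*Complex.I))‖ = r := by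
    rw [norm_mul, habse, mul_one, Complex.norm_real, Real.norm_eq_abs, _root_.abs_of_nonneg hr]
  have h2 := abs_norm_sub_norm_le a ((r:ℂ) * Complex.exp ((t:ℂ)*Complex.I))
  rw [h1, abs_sub_comm] at h2
  have h3 := le_trans (le_abs_self _) h2
  linarith

lemma L5 (a : ℂ) (r ε : ℝ) (hr : 0 ≤ r) (hε : 0 < ε) :
    (2*Real.pi) * Real.log (max (‖a‖) ε)
      ≤ ∫ t in (0:ℝ)..(2*Real.pi),
          Real.log (max (‖(a - (r:ℂ) * Complex.exp ((t:ℂ) * Complex.I))‖) ε) := by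
  rcases le_or_gt (‖a‖) ε with hcase | hcase
  · -- |a| ≤ ε : integrand ≥ log ε pointwise
    rw [max_eq_right hcase]
    have : (2*Real.pi) * Real.log ε
        = ∫ _t in (0:ℝ)..(2*Real.pi), Real.log ε := by
      rw [intervalIntegral.integral_const, smul_eq_mul, sub_zero]
    rw [this]
    apply intervalIntegral.integral_mono_on (by positivity)
      intervalIntegrable_const ((contmax a r ε hε).intervalIntegrable _ _)
    intro t _
    exact Real.log_le_log hε (le_max_right _ _)
  · rw [max_eq_left hcase.le]
    have hapos : 0 < ‖a‖ := lt_trans hε hcase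
    rcases lt_trichotomy r (‖a‖) with h1 | h1 | h1
    · exact L5a a r ε hr hε h1
    · -- |a| = r : approximate by dilations
      set s : ℕ → ℝ := fun k => 1 + 1/(k+1) with hs
      have hs1 : ∀ k : ℕ, 1 < s k := by
        intro k
        have : (0:ℝ) < 1/((k:ℝ)+1) := by positivity
        simp only [hs]; linarith
      have hs2 : ∀ k : ℕ, s k ≤ 2 := by
        intro k
        have : (1:ℝ)/((k:ℝ)+1) ≤ 1 := by
          rw [div_le_one (by positivity)]
          linarith [Nat.cast_nonneg (α := ℝ) k]
        simp only [hs]; linarith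
      set F : ℕ → ℝ → ℝ := fun k t =>
        Real.log (max (‖(((s k : ℝ) : ℂ) * a - (r:ℂ) * Complex.exp ((t:ℂ) * Complex.I))‖) ε)
        with hF
      have habsk : ∀ k : ℕ, ‖(((s k : ℝ) : ℂ) * a)‖ = s k * ‖a‖ := by
        intro k
        rw [norm_mul, Complex.norm_real, Real.norm_eq_abs, _root_.abs_of_pos (lt_trans one_pos (hs1 k))]
      have hgt : ∀ k : ℕ, r < ‖(((s k : ℝ) : ℂ) * a)‖ := by
        intro k
        rw [habsk, ← h1]
        nlinarith [hs1 k, hapos, h1]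
      have hstep : ∀ k : ℕ, (2*Real.pi) * Real.log (‖a‖)
          ≤ ∫ t in (0:ℝ)..(2*Real.pi), F k t := by
        intro k
        refine le_trans ?_ (L5a _ r ε hr hε (hgt k))
        have h2 : Real.log (‖a‖) ≤ Real.log (‖(((s k : ℝ) : ℂ) * a)‖) := by
          apply Real.log_le_log hapos
          rw [habsk]
          nlinarith [hs1 k, hapos]
        exact mul_le_mul_of_nonneg_left h2 (by positivity)
      -- dominated convergence
      set C : ℝ := 2 * ‖a‖ + r + ε + 1 with hC
      have hbound : ∀ k : ℕ, ∀ t : ℝ, |F k t| ≤ |Real.log ε| + |Real.log C| := by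
        intro k t
        have hle : max (‖(((s k : ℝ) : ℂ) * a - (r:ℂ) * Complex.exp ((t:ℂ) * Complex.I))‖) ε ≤ C := by
          apply max_le
          · calc ‖(((s k : ℝ) : ℂ) * a - (r:ℂ) * Complex.exp ((t:ℂ) * Complex.I))‖
                ≤ ‖(((s k : ℝ) : ℂ) * a)‖ + ‖((r:ℂ) * Complex.exp ((t:ℂ) * Complex.I))‖ :=
                  norm_sub_le _ _
              _ ≤ 2 * ‖a‖ + r := by
                  rw [habsk, norm_mul, habse, mul_one, Complex.norm_real, Real.norm_eq_abs, _root_.abs_of_nonneg hr]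
                  nlinarith [hs2 k, hapos.le]
              _ ≤ C := by rw [hC]; linarith
          · rw [hC]; nlinarith [hapos.le, hr]
        have hge : Real.log ε ≤ F k t := Real.log_le_log hε (le_max_right _ _)
        have hle2 : F k t ≤ Real.log C := Real.log_le_log
          (lt_of_lt_of_le hε (le_max_right _ _)) hle
        rw [abs_le]
        constructor
        · linarith [neg_abs_le (Real.log ε), le_abs_self (Real.log C), abs_nonneg (Real.log C)]
        · linarith [le_abs_self (Real.log C), abs_nonneg (Real.log ε)]
      have hlim : Tendsto (fun k => ∫ t in (0:ℝ)..(2*Real.pi), F k t) atTop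
          (𝓝 (∫ t in (0:ℝ)..(2*Real.pi),
            Real.log (max (‖(a - (r:ℂ) * Complex.exp ((t:ℂ) * Complex.I))‖) ε))) := by
        apply intervalIntegral.tendsto_integral_filter_of_dominated_convergence
          (fun _ => |Real.log ε| + |Real.log C|)
        · exact Eventually.of_forall fun k => (contmax _ r ε hε).aestronglyMeasurable
        · exact Eventually.of_forall fun k => Eventually.of_forall fun t _ => hbound k t
        · exact intervalIntegrable_const
        · apply Eventually.of_forall
          intro t _
          have h2 : Tendsto (fun k : ℕ => ((s k : ℝ) : ℂ)) atTop (𝓝 1) := by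
          -- real convergence s k → 1, then coerce
            have hreal : Tendsto s atTop (𝓝 1) := by
              have := tendsto_one_div_add_atTop_nhds_zero_nat (𝕜 := ℝ)
              have h3 := tendsto_const_nhds (x := (1:ℝ)) (f := atTop (α := ℕ)) |>.add this
              rw [add_zero] at h3
              exact h3
            have h4 := (Complex.continuous_ofReal.tendsto 1).comp hreal
            exact h4
          have h5 : Tendsto (fun k : ℕ => ((s k : ℝ) : ℂ) * a - (r:ℂ) * Complex.exp ((t:ℂ) * Complex.I))
              atTop (𝓝 (a - (r:ℂ) * Complex.exp ((t:ℂ) * Complex.I))) := by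
            have := (h2.mul (tendsto_const_nhds (x := a))).sub
              (tendsto_const_nhds (x := (r:ℂ) * Complex.exp ((t:ℂ) * Complex.I)))
            rw [one_mul] at this
            exact this
          have h6 : Tendsto (fun k : ℕ => max (‖(((s k : ℝ) : ℂ) * a - (r:ℂ) * Complex.exp ((t:ℂ) * Complex.I))‖) ε)
              atTop (𝓝 (max (‖(a - (r:ℂ) * Complex.exp ((t:ℂ) * Complex.I))‖) ε)) :=
            (((continuous_norm.tendsto _).comp h5).max tendsto_const_nhds)
          exact (Real.continuousAt_log (lt_of_lt_of_le hε (le_max_right _ _)).ne').tendsto.comp h6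
      exact ge_of_tendsto' hlim hstep
    · -- |a| < r
      calc (2*Real.pi) * Real.log (‖a‖)
          ≤ (2*Real.pi) * Real.log r :=
            mul_le_mul_of_nonneg_left (Real.log_le_log hapos h1.le) (by positivity)
        _ = ∫ t in (0:ℝ)..(2*Real.pi),
              Real.log (‖(a - (r:ℂ) * Complex.exp ((t:ℂ) * Complex.I))‖) := (L4 a r h1).symm
        _ ≤ _ := by
            apply intervalIntegral.integral_mono_on (by positivity)
              ((contlog2 a r (fun t => (habs2' a r hr h1 t).ne')).intervalIntegrable _ _)
              ((contmax a r ε hε).intervalIntegrable _ _)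
            intro t _
            exact Real.log_le_log (habs2' a r hr h1 t) (le_max_left _ _)

noncomputable def trunc (n : ℕ) (x : ℝ) : ℝ := Real.log (max x (Real.exp (-(n:ℝ))))

lemma trunc_arg_pos (n : ℕ) (x : ℝ) : 0 < max x (Real.exp (-(n:ℝ))) :=
  lt_of_lt_of_le (Real.exp_pos _) (le_max_right _ _)

lemma trunc_anti (x : ℝ) : Antitone fun n : ℕ => trunc n x := by
  intro m n hmn
  apply Real.log_le_log (trunc_arg_pos n x)
  apply max_le_max le_rfl
  apply Real.exp_le_exp.2
  simp only [neg_le_neg_iff, Nat.cast_le]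
  exact_mod_cast hmn

lemma trunc_ge_log {n : ℕ} {x : ℝ} (hx : 0 < x) : Real.log x ≤ trunc n x :=
  Real.log_le_log hx (le_max_left _ _)

lemma trunc_ge_neg_n (n : ℕ) (x : ℝ) : -(n:ℝ) ≤ trunc n x := by
  have := Real.log_le_log (Real.exp_pos (-(n:ℝ))) (le_max_right x _)
  rwa [Real.log_exp] at this

lemma trunc_le {n : ℕ} {x C : ℝ} (hx : x ≤ C) (hC : 1 ≤ C) : trunc n x ≤ Real.log C := by
  apply Real.log_le_log (trunc_arg_pos n x)
  apply max_le hx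
  calc Real.exp (-(n:ℝ)) ≤ 1 := Real.exp_le_one_iff.2 (neg_nonpos.2 (Nat.cast_nonneg n))
    _ ≤ C := hC

lemma absLog_le {ε C y : ℝ} (hε : 0 < ε) (h1 : ε ≤ y) (h2 : y ≤ C) :
    |Real.log y| ≤ |Real.log ε| + |Real.log C| := by
  have hy : 0 < y := lt_of_lt_of_le hε h1
  have l1 : Real.log ε ≤ Real.log y := Real.log_le_log hε h1
  have l2 : Real.log y ≤ Real.log C := Real.log_le_log hy h2
  rw [abs_le]
  constructor
  · linarith [neg_abs_le (Real.log ε), abs_nonneg (Real.log C)]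
  · linarith [le_abs_self (Real.log C), abs_nonneg (Real.log ε)]

lemma abs_trunc_le {n : ℕ} {x C : ℝ} (hx : x ≤ C) (hC : 1 ≤ C) :
    |trunc n x| ≤ (n:ℝ) + |Real.log C| := by
  have h1 := trunc_ge_neg_n n x
  have h2 := trunc_le (n := n) hx hC
  rw [abs_le]
  constructor
  · linarith [abs_nonneg (Real.log C)]
  · linarith [le_abs_self (Real.log C), Nat.cast_nonneg (α := ℝ) n]

lemma cont_trunc {α : Type*} [TopologicalSpace α] {f : α → ℝ} (hf : Continuous f) (n : ℕ) :
    Continuous fun x => trunc n (f x) := by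
  rw [continuous_iff_continuousAt]
  intro x
  have hg : ContinuousAt (fun x => max (f x) (Real.exp (-(n:ℝ)))) x :=
    (hf.max continuous_const).continuousAt
  exact ContinuousAt.comp (x := x) (f := fun x => max (f x) (Real.exp (-(n:ℝ))))
    (Real.continuousAt_log (trunc_arg_pos n (f x)).ne') hg

noncomputable def pApp (μ : Measure ℂ) (n : ℕ) (z : ℂ) : ℝ :=
  ∫ w, trunc n (‖(w - z)‖) ∂μ

lemma posE_coe (r : ℝ) : posE ((r : ℝ) : EReal) = ENNReal.ofReal r := by
  rw [posE, if_neg (EReal.coe_ne_top r), EReal.toReal_coe]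

lemma posE_bot : posE ⊥ = 0 := by
  rw [posE, if_neg bot_ne_top]
  simp

lemma posE_top : posE ⊤ = ⊤ := if_pos rfl

lemma iInf_trunc (x : ℝ) (hx : 0 ≤ x) :
    ⨅ n : ℕ, ENNReal.ofReal (trunc n x) = posE (elog x) := by
  rcases eq_or_lt_of_le hx with h0 | h0
  · have htr : ∀ n : ℕ, trunc n x = -(n:ℝ) := fun n => by
      rw [trunc, ← h0, max_eq_right (Real.exp_pos _).le, Real.log_exp]
    have : elog x = ⊥ := by rw [elog, if_pos h0.symm]
    rw [this, posE_bot]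
    simp only [htr]
    simp [ENNReal.ofReal_eq_zero.2 (neg_nonpos.2 (Nat.cast_nonneg _))]
  · have helog : elog x = ((Real.log x : ℝ) : EReal) := if_neg h0.ne'
    rw [helog, posE_coe]
    apply le_antisymm
    · obtain ⟨n, hn⟩ := exists_nat_ge (-Real.log x)
      have hexp : Real.exp (-(n:ℝ)) ≤ x := by
        calc Real.exp (-(n:ℝ)) ≤ Real.exp (Real.log x) :=
            Real.exp_le_exp.2 (by linarith)
          _ = x := Real.exp_log h0
      have htr : trunc n x = Real.log x := by
        rw [trunc, max_eq_left hexp]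
      exact iInf_le_of_le n (le_of_eq (by rw [htr]))
    · exact le_iInf fun n => ENNReal.ofReal_le_ofReal (trunc_ge_log h0)

lemma iSup_trunc (x : ℝ) (hx : 0 ≤ x) :
    ⨆ n : ℕ, ENNReal.ofReal (-(trunc n x)) = posE (-(elog x)) := by
  rcases eq_or_lt_of_le hx with h0 | h0
  · have htr : ∀ n : ℕ, trunc n x = -(n:ℝ) := fun n => by
      rw [trunc, ← h0, max_eq_right (Real.exp_pos _).le, Real.log_exp]
    have : elog x = ⊥ := by rw [elog, if_pos h0.symm]
    rw [this]
    have : -(⊥ : EReal) = ⊤ := rfl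
    rw [this, posE_top]
    simp only [htr, neg_neg]
    rw [← ENNReal.iSup_natCast]
    congr 1
    funext n
    exact ENNReal.ofReal_natCast n
  · have helog : elog x = ((Real.log x : ℝ) : EReal) := if_neg h0.ne'
    rw [helog, ← EReal.coe_neg, posE_coe]
    apply le_antisymm
    · exact iSup_le fun n => ENNReal.ofReal_le_ofReal (by linarith [trunc_ge_log (n := n) h0])
    · obtain ⟨n, hn⟩ := exists_nat_ge (-Real.log x)
      have hexp : Real.exp (-(n:ℝ)) ≤ x := by
        calc Real.exp (-(n:ℝ)) ≤ Real.exp (Real.log x) :=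
            Real.exp_le_exp.2 (by linarith)
          _ = x := Real.exp_log h0
      have htr : trunc n x = Real.log x := by
        rw [trunc, max_eq_left hexp]
      exact le_iSup_of_le n (le_of_eq (by rw [htr]))

lemma cont_kernel (n : ℕ) (z : ℂ) :
    Continuous fun w : ℂ => trunc n (‖(w - z)‖) :=
  cont_trunc (continuous_norm.comp (continuous_id.sub continuous_const)) n

lemma cont_kernel' (n : ℕ) (w : ℂ) :
    Continuous fun z : ℂ => trunc n (‖(w - z)‖) :=
  cont_trunc (continuous_norm.comp (continuous_const.sub continuous_id)) n


lemma haeK {μ : Measure ℂ} {K : Set ℂ} (hsupp : μ Kᶜ = 0) : ∀ᵐ w ∂μ, w ∈ K := by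
  rw [MeasureTheory.ae_iff]
  exact hsupp

lemma exists_bound {K : Set ℂ} (hK : IsCompact K) :
    ∃ M : ℝ, 1 ≤ M ∧ ∀ w ∈ K, ‖w‖ ≤ M := by
  obtain ⟨M0, hM0⟩ := hK.isBounded.exists_norm_le
  exact ⟨max M0 1, le_max_right _ _,
    fun w hw => le_trans (hM0 w hw) (le_max_left _ _)⟩

lemma key_integrable {μ : Measure ℂ} [IsFiniteMeasure μ] {K : Set ℂ} (hsupp : μ Kᶜ = 0)
    (M : ℝ) (hM : 1 ≤ M) (hMb : ∀ w ∈ K, ‖w‖ ≤ M) (n : ℕ) (z : ℂ) :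
    Integrable (fun w => trunc n (‖(w - z)‖)) μ := by
  apply Integrable.mono' (integrable_const ((n:ℝ) + |Real.log (M + ‖z‖)|))
    (cont_kernel n z).aestronglyMeasurable
  filter_upwards [haeK hsupp] with w hw
  rw [Real.norm_eq_abs]
  apply abs_trunc_le
  · calc ‖(w - z)‖ ≤ ‖w‖ + ‖z‖ := norm_sub_le _ _
      _ ≤ M + ‖z‖ := by linarith [hMb w hw]
  · linarith [norm_nonneg z]

lemma key {μ : Measure ℂ} [IsFiniteMeasure μ] {K : Set ℂ} (hsupp : μ Kᶜ = 0)
    (M : ℝ) (hM : 1 ≤ M) (hMb : ∀ w ∈ K, ‖w‖ ≤ M) (z : ℂ) :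
    (∀ n, logPotential μ z ≤ ((pApp μ n z : ℝ) : EReal)) ∧
    Tendsto (fun n => ((pApp μ n z : ℝ) : EReal)) atTop (𝓝 (logPotential μ z)) := by
  set C : ℝ := M + ‖z‖ with hC
  have hC1 : 1 ≤ C := by rw [hC]; linarith [norm_nonneg z]
  have habs : ∀ᵐ w ∂μ, ‖(w - z)‖ ≤ C := by
    filter_upwards [haeK hsupp] with w hw
    calc ‖(w - z)‖ ≤ ‖w‖ + ‖z‖ := norm_sub_le _ _
      _ ≤ C := by rw [hC]; linarith [hMb w hw]
  set A : ℕ → ℝ≥0∞ := fun n => ∫⁻ w, ENNReal.ofReal (trunc n (‖(w - z)‖)) ∂μ with hA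
  set B : ℕ → ℝ≥0∞ := fun n => ∫⁻ w, ENNReal.ofReal (-(trunc n (‖(w - z)‖))) ∂μ with hB
  set Ai : ℝ≥0∞ := ∫⁻ w, posE (elog (‖(w - z)‖)) ∂μ with hAi
  set Bi : ℝ≥0∞ := ∫⁻ w, posE (-(elog (‖(w - z)‖))) ∂μ with hBi
  have hmeasA : ∀ n : ℕ, Measurable fun w => ENNReal.ofReal (trunc n (‖(w - z)‖)) :=
    fun n => (cont_kernel n z).measurable.ennreal_ofReal
  have hmeasB : ∀ n : ℕ, Measurable fun w => ENNReal.ofReal (-(trunc n (‖(w - z)‖))) :=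
    fun n => ((cont_kernel n z).neg.measurable).ennreal_ofReal
  -- finiteness
  have hAle : ∀ n : ℕ, A n ≤ ENNReal.ofReal (Real.log C) * μ Set.univ := by
    intro n
    rw [hA, ← MeasureTheory.lintegral_const]
    apply lintegral_mono_ae
    filter_upwards [habs] with w hw
    exact ENNReal.ofReal_le_ofReal (trunc_le hw hC1)
  have hAfin : ∀ n : ℕ, A n ≠ ⊤ := fun n =>
    (lt_of_le_of_lt (hAle n) (ENNReal.mul_lt_top ENNReal.ofReal_lt_top (measure_lt_top μ _))).ne
  have hAifin : Ai ≠ ⊤ := by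
    have hle : Ai ≤ ENNReal.ofReal (Real.log C) * μ Set.univ := by
      rw [hAi, ← MeasureTheory.lintegral_const]
      apply lintegral_mono_ae
      filter_upwards [habs] with w hw
      rcases eq_or_lt_of_le (norm_nonneg (w - z)) with h0 | h0
      · rw [elog, if_pos h0.symm, posE_bot]; exact bot_le
      · rw [elog, if_neg h0.ne', posE_coe]
        exact ENNReal.ofReal_le_ofReal (Real.log_le_log h0 hw)
    exact (lt_of_le_of_lt hle (ENNReal.mul_lt_top ENNReal.ofReal_lt_top (measure_lt_top μ _))).ne
  have hBfin : ∀ n : ℕ, B n ≠ ⊤ := by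
    intro n
    have hle : B n ≤ ENNReal.ofReal (n:ℝ) * μ Set.univ := by
      rw [hB, ← MeasureTheory.lintegral_const]
      apply lintegral_mono
      intro w
      exact ENNReal.ofReal_le_ofReal (by linarith [trunc_ge_neg_n n (‖(w - z)‖)])
    exact (lt_of_le_of_lt hle (ENNReal.mul_lt_top ENNReal.ofReal_lt_top (measure_lt_top μ _))).ne
  -- pApp in terms of A, B
  have hint : ∀ n, Integrable (fun w => trunc n (‖(w - z)‖)) μ :=
    fun n => key_integrable hsupp M hM hMb n z
  have hpApp : ∀ n : ℕ, pApp μ n z = (A n).toReal - (B n).toReal := fun n =>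
    integral_eq_lintegral_pos_part_sub_lintegral_neg_part (hint n)
  -- logPotential as Ai - Bi
  have hlp : logPotential μ z = ENNReal.toEReal Ai - ENNReal.toEReal Bi := rfl
  -- monotone comparisons
  have hAile : ∀ n : ℕ, Ai ≤ A n := by
    intro n
    apply lintegral_mono
    intro w
    show posE (elog (‖(w - z)‖)) ≤ ENNReal.ofReal (trunc n (‖(w - z)‖))
    rw [← iInf_trunc _ (norm_nonneg _)]
    exact iInf_le _ n
  have hBile : ∀ n : ℕ, B n ≤ Bi := by
    intro n
    apply lintegral_mono
    intro w
    show ENNReal.ofReal (-(trunc n (‖(w - z)‖))) ≤ posE (-(elog (‖(w - z)‖)))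
    rw [← iSup_trunc _ (norm_nonneg _)]
    exact le_iSup (fun n => ENNReal.ofReal (-(trunc n (‖(w - z)‖)))) n
  -- part 1 : lower bound
  have hpart1 : ∀ n, logPotential μ z ≤ ((pApp μ n z : ℝ) : EReal) := by
    intro n
    rw [hlp, hpApp n, EReal.coe_sub]
    have e1 : ((A n).toReal : EReal) = ENNReal.toEReal (A n) := by
      rw [← EReal.toReal_coe_ennreal (x := A n)]
      exact EReal.coe_toReal (by simpa using hAfin n) (by simp)
    have e2 : ((B n).toReal : EReal) = ENNReal.toEReal (B n) := by
      rw [← EReal.toReal_coe_ennreal (x := B n)]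
      exact EReal.coe_toReal (by simpa using hBfin n) (by simp)
    rw [e1, e2]
    exact EReal.sub_le_sub (EReal.coe_ennreal_le_coe_ennreal_iff.2 (hAile n))
      (EReal.coe_ennreal_le_coe_ennreal_iff.2 (hBile n))
  refine ⟨hpart1, ?_⟩
  -- convergence of A and B
  have hAanti' : Antitone fun (n : ℕ) (w : ℂ) => ENNReal.ofReal (trunc n (‖(w - z)‖)) :=
    fun m n hmn w => ENNReal.ofReal_le_ofReal (trunc_anti _ hmn)
  have hAanti : Antitone A := fun m n hmn => lintegral_mono (hAanti' hmn)
  have hAiInf : (⨅ n, A n) = Ai := by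
    have h1 := lintegral_iInf hmeasA hAanti' (hAfin 0)
    have h2 : ∫⁻ w, ⨅ n, ENNReal.ofReal (trunc n (‖(w - z)‖)) ∂μ = Ai :=
      lintegral_congr fun w => iInf_trunc _ (norm_nonneg _)
    rw [← h2, ← h1]
  have hAtend : Tendsto A atTop (𝓝 Ai) := hAiInf ▸ tendsto_atTop_iInf hAanti
  have hBmono' : Monotone fun (n : ℕ) (w : ℂ) => ENNReal.ofReal (-(trunc n (‖(w - z)‖))) :=
    fun m n hmn w => ENNReal.ofReal_le_ofReal (by linarith [trunc_anti (‖(w - z)‖) hmn])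
  have hBmono : Monotone B := fun m n hmn => lintegral_mono (hBmono' hmn)
  have hBiSup : (⨆ n, B n) = Bi := by
    have h1 := lintegral_iSup (μ := μ) hmeasB hBmono'
    have h2 : ∫⁻ w, ⨆ n, ENNReal.ofReal (-(trunc n (‖(w - z)‖))) ∂μ = Bi :=
      lintegral_congr fun w => iSup_trunc _ (norm_nonneg _)
    rw [← h2, ← h1]
  have hBtend : Tendsto B atTop (𝓝 Bi) := hBiSup ▸ tendsto_atTop_iSup hBmono
  rcases eq_or_ne Bi ⊤ with hBtop | hBtop
  · -- potential is ⊥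
    have hlpbot : logPotential μ z = ⊥ := by
      rw [hlp, hBtop]
      simp [EReal.sub_top]
    rw [hlpbot]
    have hAbd : ∀ n, (A n).toReal ≤ (A 0).toReal := fun n =>
      ENNReal.toReal_mono (hAfin 0) (hAanti (Nat.zero_le n))
    have hBbig : Tendsto (fun n => (B n).toReal) atTop atTop := by
      rw [tendsto_atTop_atTop]
      intro M'
      have hmem : Set.Ioi (ENNReal.ofReal (max M' 0)) ∈ 𝓝 (⊤ : ℝ≥0∞) :=
        Ioi_mem_nhds (by simp [ENNReal.ofReal_lt_top])
      have hev := hBtend (hBtop ▸ hmem)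
      rw [mem_map, mem_atTop_sets] at hev
      obtain ⟨N, hN⟩ := hev
      refine ⟨N, fun n hn => ?_⟩
      have h1 : ENNReal.ofReal (max M' 0) < B n := hN n hn
      calc M' ≤ max M' 0 := le_max_left _ _
        _ = (ENNReal.ofReal (max M' 0)).toReal := (ENNReal.toReal_ofReal (le_max_right _ _)).symm
        _ ≤ (B n).toReal := ENNReal.toReal_mono (hBfin n) h1.le
    have hbot : Tendsto (fun n => pApp μ n z) atTop atBot := by
      apply tendsto_atBot_mono (g := fun n => pApp μ n z)
        (f := fun n => (A 0).toReal - (B n).toReal)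
      · intro n
        rw [hpApp n]
        linarith [hAbd n]
      · have h3 : Tendsto (fun n => -(B n).toReal) atTop atBot :=
          tendsto_neg_atTop_atBot.comp hBbig
        have h4 := tendsto_atBot_add_const_left atTop ((A 0).toReal) h3
        simpa [sub_eq_add_neg] using h4
    rw [EReal.tendsto_nhds_bot_iff_real]
    intro x
    filter_upwards [hbot.eventually_le_atBot (x - 1)] with n hn
    exact EReal.coe_lt_coe_iff.2 (by linarith)
  · -- everything finite
    have hAr : Tendsto (fun n => (A n).toReal) atTop (𝓝 Ai.toReal) :=
      (ENNReal.tendsto_toReal hAifin).comp hAtend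
    have hBr : Tendsto (fun n => (B n).toReal) atTop (𝓝 Bi.toReal) :=
      (ENNReal.tendsto_toReal hBtop).comp hBtend
    have hsub : Tendsto (fun n => pApp μ n z) atTop (𝓝 (Ai.toReal - Bi.toReal)) := by
      simp only [hpApp]
      exact hAr.sub hBr
    have hlpeq : logPotential μ z = ((Ai.toReal - Bi.toReal : ℝ) : EReal) := by
      rw [hlp, EReal.coe_sub]
      congr 1
      · rw [← EReal.toReal_coe_ennreal (x := Ai)]
        exact (EReal.coe_toReal (by simpa using hAifin) (by simp)).symm
      · rw [← EReal.toReal_coe_ennreal (x := Bi)]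
        exact (EReal.coe_toReal (by simpa using hBtop) (by simp)).symm
    rw [hlpeq]
    exact (continuous_coe_real_ereal.tendsto _).comp hsub

lemma pApp_cont {μ : Measure ℂ} [IsFiniteMeasure μ] {K : Set ℂ} (hsupp : μ Kᶜ = 0)
    (M : ℝ) (hM : 1 ≤ M) (hMb : ∀ w ∈ K, ‖w‖ ≤ M) (n : ℕ) :
    Continuous (pApp μ n) := by
  rw [continuous_iff_continuousAt]
  intro z₀
  apply MeasureTheory.continuousAt_of_dominated
    (bound := fun _ => (n:ℝ) + |Real.log (M + ‖z₀‖ + 1)|)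
  · exact Eventually.of_forall fun z => (cont_kernel n z).aestronglyMeasurable
  · filter_upwards [Metric.ball_mem_nhds z₀ one_pos] with z hz
    filter_upwards [haeK hsupp] with w hw
    rw [Real.norm_eq_abs]
    apply abs_trunc_le
    · have h1 : ‖(z - z₀)‖ < 1 := by
        rw [← Complex.dist_eq]
        exact Metric.mem_ball.1 hz
      have h2 : ‖z‖ ≤ ‖z₀‖ + 1 := by
        calc ‖z‖ = ‖(z₀ + (z - z₀))‖ := by ring_nf
          _ ≤ ‖z₀‖ + ‖(z - z₀)‖ := norm_add_le _ _
          _ ≤ ‖z₀‖ + 1 := by linarith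
      calc ‖(w - z)‖ ≤ ‖w‖ + ‖z‖ := norm_sub_le _ _
        _ ≤ M + ‖z₀‖ + 1 := by linarith [hMb w hw]
    · linarith [norm_nonneg z₀]
  · exact integrable_const _
  · exact Eventually.of_forall fun w => (cont_kernel' n w).continuousAt

lemma submean {μ : Measure ℂ} [IsFiniteMeasure μ] {K : Set ℂ} (hsupp : μ Kᶜ = 0)
    (M : ℝ) (hM : 1 ≤ M) (hMb : ∀ w ∈ K, ‖w‖ ≤ M)
    (n : ℕ) (w₀ : ℂ) (r : ℝ) (hr0 : 0 ≤ r) (hr1 : r < 1) :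
    pApp μ n w₀ ≤ (1/(2*Real.pi)) *
      ∫ t in (0:ℝ)..(2*Real.pi), pApp μ n (w₀ + (r:ℂ) * Complex.exp ((t:ℂ) * Complex.I)) := by
  have h2pi : (0:ℝ) < 2*Real.pi := by positivity
  set ν : Measure ℝ := volume.restrict (Set.Ioc (0:ℝ) (2*Real.pi)) with hν
  haveI : IsFiniteMeasure ν := by
    constructor
    rw [hν, Measure.restrict_apply_univ]
    exact measure_Ioc_lt_top
  set zc : ℝ → ℂ := fun t => w₀ + (r:ℂ) * Complex.exp ((t:ℂ) * Complex.I) with hzc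
  set f : ℝ → ℂ → ℝ := fun t w => trunc n (‖(w - zc t)‖) with hf
  have hzcont : Continuous zc := by fun_prop
  have hFcont : Continuous (Function.uncurry f) := by
    apply cont_trunc
    apply continuous_norm.comp
    exact (continuous_snd.sub (hzcont.comp continuous_fst))
  set C2 : ℝ := M + ‖w₀‖ + 1 with hC2
  have hC21 : 1 ≤ C2 := by rw [hC2]; linarith [norm_nonneg w₀]
  have haeprod : ∀ᵐ p ∂(ν.prod μ), p.2 ∈ K := by
    rw [MeasureTheory.ae_iff]
    have hset : {p : ℝ × ℂ | ¬ p.2 ∈ K} = Set.univ ×ˢ Kᶜ := by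
      ext p
      simp [Set.mem_prod]
    rw [hset, Measure.prod_prod, hsupp, mul_zero]
  have habsb : ∀ t : ℝ, ∀ w ∈ K, ‖(w - zc t)‖ ≤ C2 := by
    intro t w hw
    have h1 : ‖(zc t)‖ ≤ ‖w₀‖ + r := by
      rw [hzc]
      calc ‖(w₀ + (r:ℂ) * Complex.exp ((t:ℂ) * Complex.I))‖
          ≤ ‖w₀‖ + ‖((r:ℂ) * Complex.exp ((t:ℂ) * Complex.I))‖ :=
            norm_add_le _ _
        _ = ‖w₀‖ + r := by
            rw [norm_mul, habse, mul_one, Complex.norm_real, Real.norm_eq_abs, _root_.abs_of_nonneg hr0]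
    calc ‖(w - zc t)‖ ≤ ‖w‖ + ‖(zc t)‖ := norm_sub_le _ _
      _ ≤ C2 := by rw [hC2]; linarith [hMb w hw]
  have hFi : Integrable (Function.uncurry f) (ν.prod μ) := by
    apply Integrable.mono' (integrable_const ((n:ℝ) + |Real.log C2|))
      hFcont.aestronglyMeasurable
    filter_upwards [haeprod] with p hp
    rw [Real.norm_eq_abs]
    exact abs_trunc_le (habsb p.1 p.2 hp) hC21
  have hswap := MeasureTheory.integral_integral_swap (μ := ν) (ν := μ) (f := f) hFi
  -- pointwise inner inequality
  have hptwise : ∀ w : ℂ, (2*Real.pi) * trunc n (‖(w - w₀)‖)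
      ≤ ∫ t, f t w ∂ν := by
    intro w
    have hconv : (∫ t, f t w ∂ν) = ∫ t in (0:ℝ)..(2*Real.pi), f t w := by
      rw [intervalIntegral.integral_of_le h2pi.le]
    rw [hconv]
    have hrw : ∀ t : ℝ, f t w
        = Real.log (max (‖((w - w₀) - (r:ℂ) * Complex.exp ((t:ℂ) * Complex.I))‖)
            (Real.exp (-(n:ℝ)))) := by
      intro t
      rw [hf]
      simp only [hzc]
      congr 2
      ring
    simp only [hrw]
    have := L5 (w - w₀) r (Real.exp (-(n:ℝ))) hr0 (Real.exp_pos _)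
    rw [trunc]
    exact this
  -- integrate the pointwise inequality
  have hint1 : Integrable (fun w => (2*Real.pi) * trunc n (‖(w - w₀)‖)) μ :=
    (key_integrable hsupp M hM hMb n w₀).const_mul _
  have hint2 : Integrable (fun w => ∫ t, f t w ∂ν) μ := hFi.integral_prod_right
  have hmono := integral_mono hint1 hint2 hptwise
  rw [integral_const_mul] at hmono
  rw [hswap.symm] at hmono
  -- identify with the interval integral of pApp
  have hfinal : (∫ t, ∫ w, f t w ∂μ ∂ν)
      = ∫ t in (0:ℝ)..(2*Real.pi), pApp μ n (zc t) := by
    rw [intervalIntegral.integral_of_le h2pi.le]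
    rfl
  rw [hfinal] at hmono
  calc pApp μ n w₀ = (1/(2*Real.pi)) * ((2*Real.pi) * pApp μ n w₀) := by field_simp
    _ ≤ (1/(2*Real.pi)) * ∫ t in (0:ℝ)..(2*Real.pi), pApp μ n (zc t) :=
        mul_le_mul_of_nonneg_left (by exact_mod_cast hmono) (by positivity)

lemma pApp_anti {μ : Measure ℂ} [IsFiniteMeasure μ] {K : Set ℂ} (hsupp : μ Kᶜ = 0)
    (M : ℝ) (hM : 1 ≤ M) (hMb : ∀ w ∈ K, ‖w‖ ≤ M) (z : ℂ) :
    Antitone fun n => pApp μ n z := fun m n h =>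
  integral_mono (key_integrable hsupp M hM hMb n z) (key_integrable hsupp M hM hMb m z)
    (fun w => trunc_anti _ h)

theorem stmt9_aux (μ : Measure ℂ) [IsFiniteMeasure μ] (K : Set ℂ) (hK : IsCompact K)
    (hsupp : μ Kᶜ = 0) :
    Subharmonic (logPotential μ) Set.univ := by
  obtain ⟨M, hM, hMb⟩ := exists_bound hK
  have h2pi : (0:ℝ) < 2*Real.pi := by positivity
  constructor
  · -- upper semicontinuity
    intro z _ y hy
    obtain ⟨hle, htend⟩ := key hsupp M hM hMb z
    obtain ⟨n, hn⟩ : ∃ n, ((pApp μ n z : ℝ) : EReal) < y := by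
      have hmem : Set.Iio y ∈ 𝓝 (logPotential μ z) := Iio_mem_nhds hy
      have h := htend hmem
      rw [mem_map, mem_atTop_sets] at h
      obtain ⟨N, hN⟩ := h
      exact ⟨N, hN N le_rfl⟩
    have hcont : Continuous fun z' => ((pApp μ n z' : ℝ) : EReal) :=
      continuous_coe_real_ereal.comp (pApp_cont hsupp M hM hMb n)
    have hev : ∀ᶠ z' in 𝓝 z, ((pApp μ n z' : ℝ) : EReal) < y :=
      hcont.continuousAt (Iio_mem_nhds hn)
    have hev' : ∀ᶠ z' in 𝓝[Set.univ] z, ((pApp μ n z' : ℝ) : EReal) < y :=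
      nhdsWithin_le_nhds hev
    filter_upwards [hev'] with z' hz'
    exact lt_of_le_of_lt ((key hsupp M hM hMb z').1 n) hz'
  · -- submean inequality
    intro w₀ _
    refine ⟨1, one_pos, ?_⟩
    intro r hr0 hr1 g hg hgint
    set zc : ℝ → ℂ := fun t => w₀ + (r:ℂ) * Complex.exp ((t:ℂ) * Complex.I) with hzc
    set q : ℕ → ℝ → ℝ := fun n t => pApp μ n (zc t) with hq
    have hqcont : ∀ n, Continuous (q n) :=
      fun n => (pApp_cont hsupp M hM hMb n).comp (by fun_prop)
    have hq1 : ∀ n, logPotential μ w₀ ≤ ((pApp μ n w₀ : ℝ) : EReal) :=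
      (key hsupp M hM hMb w₀).1
    have hq2 : ∀ n, pApp μ n w₀ ≤ (1/(2*Real.pi)) * ∫ t in (0:ℝ)..(2*Real.pi), q n t :=
      fun n => submean hsupp M hM hMb n w₀ r hr0 hr1
    have hqanti : ∀ t, Antitone fun n => q n t :=
      fun t m n h => pApp_anti hsupp M hM hMb (zc t) h
    -- interval integrability of max
    have hgae : AEStronglyMeasurable g (volume.restrict (Set.uIoc 0 (2*Real.pi))) :=
      (intervalIntegrable_iff.1 hgint).aestronglyMeasurable
    have hmaxint : ∀ n, IntervalIntegrable (fun t => max (q n t) (g t)) volume 0 (2*Real.pi) := by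
      intro n
      have h1 : IntervalIntegrable (q n) volume 0 (2*Real.pi) :=
        (hqcont n).intervalIntegrable 0 (2*Real.pi)
      exact ⟨h1.1.sup hgint.1, h1.2.sup hgint.2⟩
    have hstep3 : ∀ n, ∫ t in (0:ℝ)..(2*Real.pi), q n t
        ≤ ∫ t in (0:ℝ)..(2*Real.pi), max (q n t) (g t) :=
      fun n => intervalIntegral.integral_mono_on h2pi.le
        ((hqcont n).intervalIntegrable _ _) (hmaxint n) (fun t _ => le_max_left _ _)
    -- dominated convergence
    have hIoc : Set.uIoc (0:ℝ) (2*Real.pi) = Set.Ioc 0 (2*Real.pi) := Set.uIoc_of_le h2pi.le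
    have hdct : Tendsto (fun n => ∫ t in (0:ℝ)..(2*Real.pi), max (q n t) (g t)) atTop
        (𝓝 (∫ t in (0:ℝ)..(2*Real.pi), g t)) := by
      apply intervalIntegral.tendsto_integral_filter_of_dominated_convergence
        (bound := fun t => |q 0 t| + (|g t| + |g t|))
      · exact Eventually.of_forall fun n =>
          ((hqcont n).aestronglyMeasurable.aemeasurable.max hgae.aemeasurable).aestronglyMeasurable
      · apply Eventually.of_forall
        intro n
        apply Eventually.of_forall
        intro t _
        have h1 : q n t ≤ q 0 t := hqanti t (Nat.zero_le n)
        rw [Real.norm_eq_abs, abs_le]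
        constructor
        · have := le_max_right (q n t) (g t)
          linarith [neg_abs_le (g t), abs_nonneg (q 0 t), abs_nonneg (g t)]
        · have h2 : max (q n t) (g t) ≤ max (q 0 t) (g t) := max_le_max h1 le_rfl
          have h3 : max (q 0 t) (g t) ≤ |q 0 t| + |g t| :=
            max_le (le_trans (le_abs_self _) (by linarith [abs_nonneg (g t)]))
              (le_trans (le_abs_self _) (by linarith [abs_nonneg (q 0 t)]))
          linarith [abs_nonneg (g t)]
      · exact (((hqcont 0).intervalIntegrable _ _).abs).add (hgint.abs.add hgint.abs)
      · apply Eventually.of_forall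
        intro t ht
        rw [hIoc] at ht
        have hticc : t ∈ Set.Icc (0:ℝ) (2*Real.pi) := ⟨ht.1.le, ht.2⟩
        have hu : logPotential μ (zc t) ≤ ((g t : ℝ) : EReal) := hg t hticc
        have htendq : Tendsto (fun n => ((q n t : ℝ) : EReal)) atTop
            (𝓝 (logPotential μ (zc t))) := (key hsupp M hM hMb (zc t)).2
        rw [Metric.tendsto_atTop]
        intro ε hε
        have hlt : logPotential μ (zc t) < ((g t + ε/2 : ℝ) : EReal) :=
          lt_of_le_of_lt hu (EReal.coe_lt_coe_iff.2 (by linarith))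
        have h := htendq (Iio_mem_nhds hlt)
        rw [mem_map, mem_atTop_sets] at h
        obtain ⟨N, hN⟩ := h
        refine ⟨N, fun n hn => ?_⟩
        have h1 : q n t < g t + ε/2 := EReal.coe_lt_coe_iff.1 (hN n hn)
        rw [Real.dist_eq, _root_.abs_of_nonneg (sub_nonneg.2 (le_max_right (q n t) (g t)))]
        have h2 : max (q n t) (g t) ≤ g t + ε/2 := max_le h1.le (by linarith)
        linarith
    -- combine
    have hub : ∀ n, logPotential μ w₀
        ≤ ((((1/(2*Real.pi)) * ∫ t in (0:ℝ)..(2*Real.pi), max (q n t) (g t) : ℝ)) : EReal) := by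
      intro n
      refine le_trans (hq1 n) (EReal.coe_le_coe_iff.2 ?_)
      exact le_trans (hq2 n) (mul_le_mul_of_nonneg_left (hstep3 n) (by positivity))
    have hlim2 : Tendsto
        (fun n => ((((1/(2*Real.pi)) * ∫ t in (0:ℝ)..(2*Real.pi), max (q n t) (g t) : ℝ)) : EReal))
        atTop (𝓝 ((((1/(2*Real.pi)) * ∫ t in (0:ℝ)..(2*Real.pi), g t : ℝ)) : EReal)) :=
      (continuous_coe_real_ereal.tendsto _).comp (hdct.const_mul _)
    exact ge_of_tendsto' hlim2 hub

theorem stmt9 (μ : Measure ℂ) [IsFiniteMeasure μ] (K : Set ℂ) (hK : IsCompact K)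
    (hsupp : μ Kᶜ = 0) :
    Subharmonic (logPotential μ) Set.univ := stmt9_aux μ K hK hsupp
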